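/- Let p be a non-constant polynomial in d complex variables with reflection p̃(z) = z₁^{k₁}⋯z_d^{k_d}·conj(p(1/conj(z₁),…,1/conj(z_d))). Suppose p has a zero at a point τ = (τ₁,…,τ_d) on the torus T^d (all |τᵢ| = 1). Then along the radial path r ↦ (rτ₁,…,rτ_d), the quantity |p(rτ)|^d − |p̃(rτ)|^d is O((1−r)^{d+1}) as r → 1⁻. Consequently there is no constant c > 0 with |p(z)|^d − |p̃(z)|^d ≥ c·∏_{i=1}^d(1−|z_i|²) on the polydisk; i.e., the inequality (with some c > 0) forces p to have no zeros on T^d. -/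

import Mathlib

open Complex MvPolynomial Asymptotics Filter

lemma aux_pow_sub {R : Type*} [NormedField R] (B : ℝ) :
    ∀ (n : ℕ) (x y : R), ‖x‖ ≤ B → ‖y‖ ≤ B →
      ‖x ^ n - y ^ n‖ ≤ n * B ^ (n - 1) * ‖x - y‖ := by
  intro n
  induction n with
  | zero => intro x y _ _; simp
  | succ n ih =>
    intro x y hx hy
    have hB : (0:ℝ) ≤ B := le_trans (norm_nonneg x) hx
    have key : x ^ (n+1) - y ^ (n+1) = x ^ n * (x - y) + (x ^ n - y ^ n) * y := by ring
    have h1 : ‖x ^ n * (x - y)‖ ≤ B ^ n * ‖x - y‖ := by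
      rw [norm_mul, norm_pow]
      exact mul_le_mul_of_nonneg_right (pow_le_pow_left₀ (norm_nonneg x) hx n) (norm_nonneg _)
    have h2 : ‖(x ^ n - y ^ n) * y‖ ≤ (n * B ^ (n - 1) * ‖x - y‖) * B := by
      rw [norm_mul]
      exact mul_le_mul (ih x y hx hy) hy (norm_nonneg y) (by positivity)
    have h3 : (n:ℝ) * B ^ (n - 1) * B ≤ n * B ^ n := by
      rcases n with _ | m
      · simp
      · rw [Nat.add_sub_cancel]
        exact le_of_eq (by rw [pow_succ]; ring)
    calc ‖x ^ (n+1) - y ^ (n+1)‖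
        = ‖x ^ n * (x - y) + (x ^ n - y ^ n) * y‖ := by rw [key]
      _ ≤ ‖x ^ n * (x - y)‖ + ‖(x ^ n - y ^ n) * y‖ := norm_add_le _ _
      _ ≤ B ^ n * ‖x - y‖ + (n * B ^ (n - 1) * ‖x - y‖) * B := add_le_add h1 h2
      _ ≤ (↑(n+1)) * B ^ ((n+1) - 1) * ‖x - y‖ := by
          rw [Nat.add_sub_cancel]
          push_cast
          nlinarith [norm_nonneg (x - y), h3]

lemma aux_poly_lip (Q : Polynomial ℂ) : ∃ L : ℝ, 0 ≤ L ∧ ∀ x y : ℂ, ‖x‖ ≤ 2 → ‖y‖ ≤ 2 →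
    ‖Q.eval x - Q.eval y‖ ≤ L * ‖x - y‖ := by
  refine ⟨∑ n ∈ Finset.range (Q.natDegree + 1), ‖Q.coeff n‖ * (n * 2 ^ (n - 1)),
    by positivity, ?_⟩
  intro x y hx hy
  rw [Polynomial.eval_eq_sum_range, Polynomial.eval_eq_sum_range, ← Finset.sum_sub_distrib]
  calc ‖∑ n ∈ Finset.range (Q.natDegree + 1), (Q.coeff n * x ^ n - Q.coeff n * y ^ n)‖
      ≤ ∑ n ∈ Finset.range (Q.natDegree + 1), ‖Q.coeff n * x ^ n - Q.coeff n * y ^ n‖ :=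
        norm_sum_le _ _
    _ ≤ ∑ n ∈ Finset.range (Q.natDegree + 1), ‖Q.coeff n‖ * (n * 2 ^ (n - 1)) * ‖x - y‖ := by
        refine Finset.sum_le_sum fun n _ => ?_
        rw [← mul_sub, norm_mul]
        calc ‖Q.coeff n‖ * ‖x ^ n - y ^ n‖
            ≤ ‖Q.coeff n‖ * (n * 2 ^ (n - 1) * ‖x - y‖) :=
              mul_le_mul_of_nonneg_left (aux_pow_sub 2 n x y hx hy) (norm_nonneg _)
          _ = ‖Q.coeff n‖ * (n * 2 ^ (n - 1)) * ‖x - y‖ := by ring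
    _ = (∑ n ∈ Finset.range (Q.natDegree + 1), ‖Q.coeff n‖ * (n * 2 ^ (n - 1))) * ‖x - y‖ := by
        rw [Finset.sum_mul]

lemma aux_eval_line {d : ℕ} (p : MvPolynomial (Fin d) ℂ) (τ : Fin d → ℂ) (s : ℂ) :
    Polynomial.eval s (MvPolynomial.aeval (fun i => Polynomial.C (τ i) * Polynomial.X) p)
      = MvPolynomial.eval (fun i => s * τ i) p := by
  induction p using MvPolynomial.induction_on with
  | C a => simp
  | add p q hp hq => simp [hp, hq]
  | mul_X p i hp =>
      simp only [map_mul, aeval_X, Polynomial.eval_mul, hp, eval_mul, eval_X,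
        Polynomial.eval_C, Polynomial.eval_X]
      ring

set_option maxHeartbeats 1000000 in
/-- If a non-constant polynomial has a zero on the torus, then along the radial
path the quantity `|p|^d - |p̃|^d` is `O((1-r)^(d+1))`, and consequently no
lower bound `c·∏(1-|zᵢ|²)` with `c > 0` can hold on the polydisk. -/
theorem torus_zero_obstruction (d : ℕ) (p : MvPolynomial (Fin d) ℂ)
    (hp : 0 < p.totalDegree)
    (k : Fin d → ℕ) (hdeg : ∀ i, p.degreeOf i = k i)
    (ptilde : (Fin d → ℂ) → ℂ)
    (hpt : ∀ z : Fin d → ℂ, (∀ i, z i ≠ 0) →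
      ptilde z = (∏ i, z i ^ (k i)) *
        (starRingEnd ℂ) (MvPolynomial.eval (fun i => ((starRingEnd ℂ) (z i))⁻¹) p))
    (τ : Fin d → ℂ) (hτ : ∀ i, ‖τ i‖ = 1)
    (hzero : MvPolynomial.eval τ p = 0) :
    (fun r : ℝ =>
        ‖MvPolynomial.eval (fun i => (r : ℂ) * τ i) p‖ ^ d -
        ‖ptilde (fun i => (r : ℂ) * τ i)‖ ^ d)
      =O[nhdsWithin 1 (Set.Iio (1 : ℝ))] (fun r : ℝ => (1 - r) ^ (d + 1)) ∧
    ¬ ∃ c : ℝ, 0 < c ∧ ∀ z : Fin d → ℂ, (∀ i, ‖z i‖ < 1) →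
      c * ∏ i, (1 - ‖z i‖ ^ 2) ≤
        ‖MvPolynomial.eval z p‖ ^ d - ‖ptilde z‖ ^ d := by
  have hτne : ∀ i, τ i ≠ 0 := by
    intro i h
    have h2 := hτ i
    rw [h] at h2
    simp at h2
  have hτconj : ∀ i, (starRingEnd ℂ) (τ i) = (τ i)⁻¹ :=
    fun i => (Complex.inv_eq_conj (hτ i)).symm
  set K := ∑ i, k i with hK
  set P : Polynomial ℂ :=
    MvPolynomial.aeval (fun i => Polynomial.C (τ i) * Polynomial.X) p with hPdef
  have hPeval : ∀ s : ℂ, P.eval s = MvPolynomial.eval (fun i => s * τ i) p :=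
    fun s => aux_eval_line p τ s
  have hProot : P.eval 1 = 0 := by
    rw [hPeval]
    simpa only [one_mul] using hzero
  obtain ⟨Q, hQ⟩ : (Polynomial.X - Polynomial.C 1) ∣ P :=
    Polynomial.dvd_iff_isRoot.mpr hProot
  have hPQ : ∀ s : ℂ, P.eval s = (s - 1) * Q.eval s := by
    intro s; rw [hQ]; simp
  obtain ⟨M₀, hM₀⟩ := (isCompact_closedBall (0:ℂ) 2).exists_bound_of_continuousOn
    (Continuous.continuousOn (Polynomial.continuous Q))
  set M := max M₀ 1 with hMdef
  have hM1 : (1:ℝ) ≤ M := le_max_right _ _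
  have hM0 : (0:ℝ) ≤ M := by linarith
  have hM : ∀ z : ℂ, ‖z‖ ≤ 2 → ‖Q.eval z‖ ≤ M := by
    intro z hz
    have h3 := hM₀ z (mem_closedBall_zero_iff.mpr hz)
    exact le_trans h3 (le_max_left _ _)
  obtain ⟨L, hL0, hLip⟩ := aux_poly_lip Q
  have hC1 : (0:ℝ) ≤ 4*L + 2*((K:ℝ)+1)*M := by positivity
  set C : ℝ := d * (2*M) ^ (d - 1) * (4*L + 2*((K:ℝ)+1)*M) with hCdef
  have hC0 : (0:ℝ) ≤ C := by
    rw [hCdef]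
    exact mul_nonneg (mul_nonneg (Nat.cast_nonneg d) (pow_nonneg (by linarith) _)) hC1
  have hmem : Set.Ioo (1/2 : ℝ) 1 ∈ nhdsWithin (1:ℝ) (Set.Iio 1) :=
    Ioo_mem_nhdsLT_of_mem ⟨by norm_num, le_refl 1⟩
  have hO : (fun r : ℝ =>
        ‖MvPolynomial.eval (fun i => (r : ℂ) * τ i) p‖ ^ d -
        ‖ptilde (fun i => (r : ℂ) * τ i)‖ ^ d)
      =O[nhdsWithin 1 (Set.Iio (1 : ℝ))] (fun r : ℝ => (1 - r) ^ (d + 1)) := by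
    rw [Asymptotics.isBigO_iff]
    refine ⟨C, ?_⟩
    filter_upwards [hmem] with r hr
    obtain ⟨hr1, hr2⟩ := hr
    have hrpos : (0:ℝ) < r := by linarith
    have hrne : (r:ℂ) ≠ 0 := Complex.ofReal_ne_zero.mpr hrpos.ne'
    have ht0 : (0:ℝ) ≤ 1 - r := by linarith
    have hinvpos : (0:ℝ) < r⁻¹ := inv_pos.mpr hrpos
    have hmul : r * r⁻¹ = 1 := mul_inv_cancel₀ hrpos.ne'
    have hinv1 : (1:ℝ) ≤ r⁻¹ := by nlinarith
    have hinv2 : r⁻¹ ≤ 2 := by nlinarith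
    set a : ℝ := ‖Q.eval (r:ℂ)‖ with ha
    set b : ℝ := ‖Q.eval ((r:ℂ))⁻¹‖ with hb
    set w : ℝ := r ^ K / r with hw
    have hanon : 0 ≤ a := by rw [ha]; exact norm_nonneg _
    have hbnon : 0 ≤ b := by rw [hb]; exact norm_nonneg _
    have hAval : ‖MvPolynomial.eval (fun i => (r:ℂ) * τ i) p‖ = (1 - r) * a := by
      rw [← hPeval, hPQ, norm_mul]
      congr 1
      rw [show ((r:ℂ) - 1) = ((r - 1 : ℝ) : ℂ) by push_cast; ring, Complex.norm_real, Real.norm_eq_abs,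
        abs_of_nonpos (by linarith)]
      ring
    have hzne : ∀ i, (r:ℂ) * τ i ≠ 0 := fun i => mul_ne_zero hrne (hτne i)
    have harg : (fun i => ((starRingEnd ℂ) ((r:ℂ) * τ i))⁻¹) = fun i => ((r:ℂ))⁻¹ * τ i := by
      funext i
      rw [map_mul, Complex.conj_ofReal, hτconj i, mul_inv, inv_inv]
    have hBval : ‖ptilde (fun i => (r:ℂ) * τ i)‖ = (1 - r) * (w * b) := by
      rw [hpt _ hzne, norm_mul, harg]
      have h1 : ‖∏ i, ((r:ℂ) * τ i) ^ k i‖ = r ^ K := by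
        rw [norm_prod]
        have h2 : ∀ i ∈ Finset.univ, ‖((r:ℂ) * τ i) ^ k i‖ = r ^ k i := by
          intro i _
          rw [norm_pow, norm_mul, Complex.norm_real, Real.norm_eq_abs, hτ i, abs_of_pos hrpos, mul_one]
        rw [Finset.prod_congr rfl h2, hK, Finset.prod_pow_eq_pow_sum]
      have h2 : ‖(starRingEnd ℂ)
          (MvPolynomial.eval (fun i => ((r:ℂ))⁻¹ * τ i) p)‖ = (r⁻¹ - 1) * b := by
        rw [Complex.norm_conj, ← hPeval, hPQ, norm_mul]
        congr 1
        rw [show ((r:ℂ)⁻¹ - 1) = ((r⁻¹ - 1 : ℝ) : ℂ) by push_cast; ring, Complex.norm_real, Real.norm_eq_abs,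
          _root_.abs_of_nonneg (by linarith)]
      rw [h1, h2, hw]
      field_simp
    have hr2le : ‖(r:ℂ)‖ ≤ 2 := by
      rw [Complex.norm_real, Real.norm_eq_abs, abs_of_pos hrpos]; linarith
    have hrinv2le : ‖((r:ℂ))⁻¹‖ ≤ 2 := by
      rw [norm_inv, Complex.norm_real, Real.norm_eq_abs, abs_of_pos hrpos]
      exact hinv2
    have hMa : a ≤ M := hM _ hr2le
    have hMb : b ≤ M := hM _ hrinv2le
    have habs : |a - b| ≤ ‖Q.eval (r:ℂ) - Q.eval ((r:ℂ))⁻¹‖ := by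
      rw [ha, hb]
      exact abs_norm_sub_norm_le _ _
    have hdist : ‖(r:ℂ) - ((r:ℂ))⁻¹‖ ≤ 4*(1-r) := by
      rw [show (r:ℂ) - ((r:ℂ))⁻¹ = ((r - r⁻¹ : ℝ):ℂ) by push_cast; ring, Complex.norm_real,
        Real.norm_eq_abs, abs_of_nonpos (by nlinarith), show -(r - r⁻¹) = r⁻¹ - r by ring]
      have hid : r⁻¹ - r = (1 - r) * ((1 + r) * r⁻¹) := by field_simp; ring
      have hfac : (1 + r) * r⁻¹ ≤ 4 := by
        calc (1 + r) * r⁻¹ ≤ 2 * 2 := mul_le_mul (by linarith) hinv2 hinvpos.le (by norm_num)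
          _ = 4 := by norm_num
      rw [hid]
      calc (1 - r) * ((1 + r) * r⁻¹) ≤ (1 - r) * 4 := mul_le_mul_of_nonneg_left hfac ht0
        _ = 4 * (1 - r) := by ring
    have hab : |a - b| ≤ L * (4*(1-r)) :=
      habs.trans ((hLip _ _ hr2le hrinv2le).trans (mul_le_mul_of_nonneg_left hdist hL0))
    have hrK1 : r ^ K ≤ 1 := pow_le_one₀ (le_of_lt hrpos) (le_of_lt hr2)
    have hw0 : 0 ≤ w := by rw [hw]; positivity
    have hw2 : w ≤ 2 := by
      rw [hw, div_le_iff₀ hrpos]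
      nlinarith
    have h1K : |1 - r ^ K| ≤ K * (1 - r) := by
      have h3 := aux_pow_sub (R := ℝ) 1 K 1 r (by simp)
        (by rw [Real.norm_eq_abs, abs_of_pos hrpos]; linarith)
      simpa [Real.norm_eq_abs, _root_.abs_of_nonneg ht0] using h3
    have hw1 : |1 - w| ≤ 2*((K:ℝ)+1)*(1-r) := by
      have hwe : 1 - w = (r - r ^ K) / r := by rw [hw]; field_simp
      rw [hwe, abs_div, abs_of_pos hrpos, div_le_iff₀ hrpos]
      have h3 : |r - r ^ K| ≤ (1 - r) + K*(1-r) := by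
        have h4 := abs_sub_le r 1 (r ^ K)
        rw [abs_of_nonpos (by linarith : r - 1 ≤ 0)] at h4
        linarith [h1K]
      nlinarith [mul_nonneg (mul_nonneg ht0 (by linarith : (0:ℝ) ≤ 2*r - 1))
        (by positivity : (0:ℝ) ≤ (K:ℝ)+1)]
    have hawb : |a - w * b| ≤ (4*L + 2*((K:ℝ)+1)*M) * (1 - r) := by
      have h5 : |b - w * b| ≤ M * (2*((K:ℝ)+1)*(1-r)) := by
        rw [show b - w*b = b * (1 - w) by ring, abs_mul, _root_.abs_of_nonneg hbnon]
        exact mul_le_mul hMb hw1 (abs_nonneg _) hM0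
      have h6 := abs_sub_le a b (w*b)
      linarith [hab, h5, h6]
    have hMr : (0:ℝ) ≤ 2*M*(1-r) := by nlinarith
    have hA2M : ‖(1-r)*a‖ ≤ 2*M*(1-r) := by
      rw [Real.norm_eq_abs, _root_.abs_of_nonneg (mul_nonneg ht0 hanon)]
      nlinarith [mul_le_mul_of_nonneg_left hMa ht0]
    have hB2M : ‖(1-r)*(w*b)‖ ≤ 2*M*(1-r) := by
      rw [Real.norm_eq_abs, _root_.abs_of_nonneg (mul_nonneg ht0 (mul_nonneg hw0 hbnon))]
      nlinarith [mul_le_mul hw2 hMb hbnon (by norm_num : (0:ℝ) ≤ 2), ht0]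
    have key := aux_pow_sub (R := ℝ) (2*M*(1-r)) d ((1-r)*a) ((1-r)*(w*b)) hA2M hB2M
    rw [hAval, hBval, Real.norm_eq_abs ((1-r)^(d+1)), _root_.abs_of_nonneg (pow_nonneg ht0 _)]
    calc ‖((1-r)*a)^d - ((1-r)*(w*b))^d‖
        ≤ d * (2*M*(1-r))^(d-1) * ‖(1-r)*a - (1-r)*(w*b)‖ := key
      _ ≤ d * (2*M*(1-r))^(d-1) * ((4*L + 2*((K:ℝ)+1)*M) * (1-r)^2) := by
          apply mul_le_mul_of_nonneg_left _
            (mul_nonneg (Nat.cast_nonneg d) (pow_nonneg hMr _))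
          rw [Real.norm_eq_abs, show (1-r)*a - (1-r)*(w*b) = (1-r)*(a - w*b) by ring,
            abs_mul, _root_.abs_of_nonneg ht0]
          nlinarith [mul_le_mul_of_nonneg_left hawb ht0]
      _ = (d * (2*M)^(d-1) * (4*L + 2*((K:ℝ)+1)*M)) * ((1-r)^(d-1) * (1-r)^2) := by
          rw [mul_pow]; ring
      _ ≤ C * (1-r)^(d+1) := by
          rw [hCdef]
          apply mul_le_mul_of_nonneg_left _
            (mul_nonneg (mul_nonneg (Nat.cast_nonneg d) (pow_nonneg (by linarith) _)) hC1)
          rw [← pow_add]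
          exact pow_le_pow_of_le_one ht0 (by linarith) (by omega)
  refine ⟨hO, ?_⟩
  rintro ⟨c, hc, hineq⟩
  obtain ⟨C', hC'⟩ := hO.bound
  have hsmall : ∀ᶠ r in nhdsWithin (1:ℝ) (Set.Iio 1), C' * (1 - r) < c := by
    have htend : Tendsto (fun r : ℝ => C' * (1 - r)) (nhdsWithin 1 (Set.Iio 1)) (nhds 0) := by
      have h3 : Tendsto (fun r : ℝ => C' * (1 - r)) (nhds 1) (nhds (C' * (1 - 1))) :=
        (continuous_const.mul (continuous_const.sub continuous_id)).tendsto 1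
      simpa using h3.mono_left nhdsWithin_le_nhds
    exact htend.eventually_lt_const hc
  have hbig : ∀ᶠ r in nhdsWithin (1:ℝ) (Set.Iio 1), c ≤ C' * (1 - r) := by
    filter_upwards [hC', hmem] with r hfr hr
    obtain ⟨hr1, hr2⟩ := hr
    have hrpos : (0:ℝ) < r := by linarith
    have ht0 : (0:ℝ) ≤ 1 - r := by linarith
    have hlt : ∀ i, ‖(r:ℂ) * τ i‖ < 1 := by
      intro i; rw [norm_mul, Complex.norm_real, Real.norm_eq_abs, hτ i, abs_of_pos hrpos, mul_one]; exact hr2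
    have h6 := hineq (fun i => (r:ℂ) * τ i) hlt
    have h7 : (∏ i, (1 - ‖(r:ℂ) * τ i‖ ^ 2)) = (1 - r^2)^d := by
      have h4 : ∀ i ∈ Finset.univ, (1 - ‖(r:ℂ) * τ i‖^2) = 1 - r^2 := by
        intro i _; rw [norm_mul, Complex.norm_real, Real.norm_eq_abs, hτ i, abs_of_pos hrpos, mul_one]
      rw [Finset.prod_congr rfl h4, Finset.prod_const, Finset.card_univ, Fintype.card_fin]
    rw [h7] at h6
    have h8 : ‖MvPolynomial.eval (fun i => (r:ℂ) * τ i) p‖ ^ d -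
        ‖ptilde (fun i => (r:ℂ) * τ i)‖ ^ d ≤ C' * (1-r)^(d+1) := by
      rw [Real.norm_eq_abs, Real.norm_eq_abs,
        _root_.abs_of_nonneg (pow_nonneg ht0 (d+1))] at hfr
      exact le_trans (le_abs_self _) hfr
    have h9 : (1 - r)^d ≤ (1 - r^2)^d :=
      pow_le_pow_left₀ ht0 (by nlinarith [mul_nonneg hrpos.le ht0]) d
    have h10 : c * (1-r)^d ≤ C' * (1-r)^(d+1) :=
      le_trans (mul_le_mul_of_nonneg_left h9 hc.le) (le_trans h6 h8)
    have hpow : 0 < (1 - r)^d := pow_pos (by linarith) d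
    have h11 : C' * (1-r)^(d+1) = (C' * (1-r)) * (1-r)^d := by rw [pow_succ]; ring
    rw [h11] at h10
    exact le_of_mul_le_mul_right h10 hpow
  obtain ⟨r, h12, h13⟩ := (hbig.and hsmall).exists
  linarith
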